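/- For every integer n ≥ 1 and real sequence where dim H⁰ grows like vol·mⁿ/n!: if vol > 0 is a real number and h : ℕ → ℕ satisfies h(m) ≥ vol·mⁿ/n! − o(mⁿ), and the number of conditions to impose multiplicity ≥ e at a point is at most (e+n−1)ⁿ/n!, then for every real t < vol^{1/n} and all sufficiently large m there exists a nonzero section vanishing to order ≥ ⌈t·m⌉; i.e., the maximal multiplicity μ_m satisfies liminf μ_m/m ≥ vol^{1/n}. -/

import Mathlib

open Filter

/-- Abstract form of `μ(L;x) ≥ vol^{1/n}(L)`. If `h m ≥ vol·m^n/n! − o(m^n)`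
and a section of multiplicity `≥ e` exists (i.e. `e ≤ μ m`) whenever
`h m > (e+n−1)^n/n!`, then for every `t < vol^{1/n}` and all sufficiently
large `m` the maximal multiplicity satisfies `μ m ≥ ⌈t·m⌉`. -/
theorem stmt_7 (n : ℕ) (hn : 1 ≤ n) (vol : ℝ) (hvol : 0 < vol)
    (h : ℕ → ℕ) (μ : ℕ → ℕ)
    (err : ℕ → ℝ)
    (herr : err =o[atTop] fun m : ℕ => (m : ℝ) ^ n)
    (hlow : ∀ m : ℕ, vol * (m : ℝ) ^ n / (n.factorial : ℝ) - err m ≤ (h m : ℝ))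
    (hmult : ∀ m e : ℕ,
      ((e : ℝ) + n - 1) ^ n / (n.factorial : ℝ) < (h m : ℝ) → e ≤ μ m) :
    ∀ t : ℝ, 0 ≤ t → t < vol ^ ((1 : ℝ) / n) →
      ∀ᶠ m : ℕ in atTop, ⌈t * (m : ℝ)⌉₊ ≤ μ m := by
  intro t ht htlt
  have hnR : (1:ℝ) ≤ (n:ℝ) := by exact_mod_cast hn
  have hnne : (n:ℝ) ≠ 0 := by positivity
  set s : ℝ := (t + vol ^ ((1 : ℝ) / n)) / 2 with hs
  have hts : t < s := by rw [hs]; linarith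
  have hsv : s < vol ^ ((1 : ℝ) / n) := by rw [hs]; linarith
  have hs0 : 0 ≤ s := le_trans ht hts.le
  have hpow : (vol ^ ((1 : ℝ) / n)) ^ n = vol := by
    rw [← Real.rpow_natCast (vol ^ ((1 : ℝ) / n)) n, ← Real.rpow_mul hvol.le,
      one_div_mul_cancel hnne, Real.rpow_one]
  have hsn : s ^ n < vol := by
    have := pow_lt_pow_left₀ hsv hs0 (by omega : n ≠ 0)
    rwa [hpow] at this
  have hfac : (0:ℝ) < (n.factorial : ℝ) := by exact_mod_cast n.factorial_pos
  set ε : ℝ := (vol - s ^ n) / (2 * n.factorial) with hε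
  have hε0 : 0 < ε := div_pos (by linarith) (by positivity)
  have hεeq : ε * (2 * (n.factorial : ℝ)) = vol - s ^ n :=
    div_mul_cancel₀ _ (by positivity)
  have h1 := herr.bound hε0
  have h2 : ∀ᶠ m : ℕ in atTop, (n : ℝ) / (s - t) ≤ (m : ℝ) :=
    tendsto_natCast_atTop_atTop.eventually_ge_atTop _
  filter_upwards [h1, h2, eventually_ge_atTop 1] with m hb hm hm1
  have hm0 : (0:ℝ) < (m:ℝ) := by exact_mod_cast hm1
  have hmn : (0:ℝ) < (m:ℝ) ^ n := by positivity
  apply hmult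
  have hceil : (⌈t * (m:ℝ)⌉₊ : ℝ) ≤ t * m + 1 :=
    (Nat.ceil_lt_add_one (by positivity)).le
  have hstm : (n : ℝ) ≤ (s - t) * m := by
    rw [div_le_iff₀ (by linarith : (0:ℝ) < s - t)] at hm
    linarith [hm]
  have hbase : (⌈t * (m:ℝ)⌉₊ : ℝ) + n - 1 ≤ s * m := by nlinarith
  have hbase0 : 0 ≤ (⌈t * (m:ℝ)⌉₊ : ℝ) + n - 1 := by
    have : (0:ℝ) ≤ (⌈t * (m:ℝ)⌉₊ : ℝ) := Nat.cast_nonneg _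
    linarith
  have hpl : ((⌈t * (m:ℝ)⌉₊ : ℝ) + n - 1) ^ n ≤ (s * m) ^ n :=
    pow_le_pow_left₀ hbase0 hbase n
  have herrm : err m ≤ ε * (m:ℝ) ^ n := by
    rw [Real.norm_eq_abs, Real.norm_eq_abs, abs_of_nonneg (le_of_lt hmn)] at hb
    exact (le_abs_self _).trans hb
  have H : s ^ n * (m:ℝ) ^ n + (n.factorial : ℝ) * err m < vol * (m:ℝ) ^ n := by
    nlinarith [mul_le_mul_of_nonneg_left herrm hfac.le,
      mul_le_mul_of_nonneg_left hεeq.le hmn.le, mul_pos hmn hfac, hsn]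
  calc ((⌈t * (m:ℝ)⌉₊ : ℝ) + n - 1) ^ n / (n.factorial : ℝ)
      ≤ (s * m) ^ n / (n.factorial : ℝ) := by
        gcongr
    _ < vol * (m:ℝ) ^ n / (n.factorial : ℝ) - err m := by
        rw [mul_pow, div_sub' (ne_of_gt hfac), div_lt_div_iff₀ hfac hfac]
        nlinarith [H, hfac]
    _ ≤ (h m : ℝ) := hlow m
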